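/- For every integer k ≥ 1, every x ∈ ℕ and every θ ∈ (0,1), the CDF of the negative binomial distribution with parameters θ and k equals a regularized incomplete beta function: ∑_{w=0}^x C(w+k−1, w)·θ^k·(1−θ)^w = ((k+x)!/((k−1)!·x!))·∫_0^θ t^{k−1}(1−t)^x dt. -/

import Mathlib

open scoped BigOperators

lemma negBinom_key (m x : ℕ) (θ : ℝ) :
    ((m : ℝ) + x + 2) * ∫ t in (0 : ℝ)..θ, t ^ m * (1 - t) ^ (x + 1) =
      ((x : ℝ) + 1) * (∫ t in (0 : ℝ)..θ, t ^ m * (1 - t) ^ x) +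
        θ ^ (m + 1) * (1 - θ) ^ (x + 1) := by
  have hderiv : ∀ t : ℝ, HasDerivAt (fun t : ℝ => t ^ (m + 1) * (1 - t) ^ (x + 1))
      (((m : ℝ) + x + 2) * (t ^ m * (1 - t) ^ (x + 1)) -
        ((x : ℝ) + 1) * (t ^ m * (1 - t) ^ x)) t := by
    intro t
    have h1 : HasDerivAt (fun t : ℝ => 1 - t) (-1) t := by
      simpa using (hasDerivAt_id t).const_sub 1
    have h2 := h1.pow (x + 1)
    have h3 : HasDerivAt (fun t : ℝ => t ^ (m + 1) * (1 - t) ^ (x + 1))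
        (((m + 1 : ℕ) : ℝ) * t ^ (m + 1 - 1) * (1 - t) ^ (x + 1) +
          t ^ (m + 1) * (((x + 1 : ℕ) : ℝ) * (1 - t) ^ (x + 1 - 1) * -1)) t :=
      (hasDerivAt_pow (m + 1) t).mul h2
    convert h3 using 1
    push_cast
    ring
  have hint : ∫ t in (0 : ℝ)..θ,
      (((m : ℝ) + x + 2) * (t ^ m * (1 - t) ^ (x + 1)) -
        ((x : ℝ) + 1) * (t ^ m * (1 - t) ^ x)) =
      θ ^ (m + 1) * (1 - θ) ^ (x + 1) := by
    have := intervalIntegral.integral_eq_sub_of_hasDerivAt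
      (f := fun t : ℝ => t ^ (m + 1) * (1 - t) ^ (x + 1)) (a := 0) (b := θ)
      (fun t _ => hderiv t) (by apply Continuous.intervalIntegrable; continuity)
    simpa using this
  have i1 : IntervalIntegrable (fun t : ℝ => t ^ m * (1 - t) ^ (x + 1))
      MeasureTheory.volume 0 θ := by apply Continuous.intervalIntegrable; continuity
  have i2 : IntervalIntegrable (fun t : ℝ => t ^ m * (1 - t) ^ x)
      MeasureTheory.volume 0 θ := by apply Continuous.intervalIntegrable; continuity
  rw [intervalIntegral.integral_sub (i1.const_mul _) (i2.const_mul _),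
    intervalIntegral.integral_const_mul, intervalIntegral.integral_const_mul] at hint
  linarith

/-- For every integer `k ≥ 1`, `x ∈ ℕ` and `θ ∈ (0,1)`, the CDF of the
negative binomial distribution with parameters `θ` and `k` equals a regularized
incomplete beta function:
`∑_{w=0}^x C(w+k−1, w) θ^k (1−θ)^w = ((k+x)!/((k−1)!·x!)) ∫_0^θ t^{k−1}(1−t)^x dt`. -/
theorem negBinomial_cdf_eq_regularized_beta (k : ℕ) (hk : 1 ≤ k) (x : ℕ)
    (θ : ℝ) (hθ : θ ∈ Set.Ioo (0 : ℝ) 1) :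
    ∑ w ∈ Finset.range (x + 1), (Nat.choose (w + k - 1) w : ℝ) * θ ^ k * (1 - θ) ^ w =
      ((Nat.factorial (k + x) : ℝ) / ((Nat.factorial (k - 1) : ℝ) * (Nat.factorial x : ℝ))) *
        ∫ t in (0 : ℝ)..θ, t ^ (k - 1) * (1 - t) ^ x := by
  obtain ⟨m, rfl⟩ : ∃ m, k = m + 1 := ⟨k - 1, (Nat.succ_pred_eq_of_pos hk).symm⟩
  simp only [Nat.add_sub_cancel]
  induction x with
  | zero =>
    simp [integral_pow, Nat.factorial_succ]
    field_simp
  | succ x ih =>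
    rw [Finset.sum_range_succ, ih]
    have hkey := negBinom_key m x θ
    have hmx : ((m : ℝ) + x + 2) ≠ 0 := by positivity
    have hI : (∫ t in (0 : ℝ)..θ, t ^ m * (1 - t) ^ (x + 1)) =
        (((x : ℝ) + 1) * (∫ t in (0 : ℝ)..θ, t ^ m * (1 - t) ^ x) +
          θ ^ (m + 1) * (1 - θ) ^ (x + 1)) / ((m : ℝ) + x + 2) := by
      field_simp
      linarith
    rw [hI]
    have hch : ((x + 1 + (m + 1) - 1).choose (x + 1) : ℝ) =
        ((m + x + 1).factorial : ℝ) / ((x + 1).factorial * m.factorial) := by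
      have h1 : x + 1 + (m + 1) - 1 = m + x + 1 := by omega
      have h2 : m + x + 1 - (x + 1) = m := by omega
      rw [h1, Nat.cast_choose ℝ (by omega : x + 1 ≤ m + x + 1), h2]
    have hf1 : ((m + 1 + (x + 1)).factorial : ℝ) =
        ((m : ℝ) + x + 2) * ((m + x + 1).factorial : ℝ) := by
      have : m + 1 + (x + 1) = (m + x + 1) + 1 := by omega
      rw [this, Nat.factorial_succ]
      push_cast; ring
    have hf2 : ((m + 1 + x).factorial : ℝ) = ((m + x + 1).factorial : ℝ) := by
      congr 2; omega
    have hf3 : ((x + 1).factorial : ℝ) = ((x : ℝ) + 1) * (x.factorial : ℝ) := by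
      rw [Nat.factorial_succ]; push_cast; ring
    rw [hch, hf1, hf2, hf3]
    have hxf : (x.factorial : ℝ) ≠ 0 := Nat.cast_ne_zero.mpr x.factorial_ne_zero
    have hmf : (m.factorial : ℝ) ≠ 0 := Nat.cast_ne_zero.mpr m.factorial_ne_zero
    field_simp
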